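/- Let C be a category with a comonad ! and finite binary coproducts. For objects A, B of C, the object !A ⊕ !B equipped with the coprojections ι₁ : !A → !A ⊕ !B and ι₂ : !B → !A ⊕ !B is a weak binary coproduct of A and B in the co-Kleisli category C_!: for any pair of co-Kleisli morphisms f : !A → X and g : !B → X there exists a co-Kleisli morphism h : !(!A ⊕ !B) → X with h ∘ ι₁ = f and h ∘ ι₂ = g in C_! (uniqueness is not required). -/

import Mathlib

open CategoryTheory CategoryTheory.Limits

universe v u

/-- Let `C` be a category with a comonad `Q` (written `!`) and finite binary
coproducts. For objects `A, B` of `C`, the object `!A ⨿ !B` equipped with the coprojections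
`ι₁ : !A ⟶ !A ⨿ !B` and `ι₂ : !B ⟶ !A ⨿ !B` (viewed as co-Kleisli morphisms
`A → !A ⨿ !B` and `B → !A ⨿ !B`) is a weak binary coproduct of `A` and `B` in the
co-Kleisli category `C_!`: for any co-Kleisli morphisms `f : !A ⟶ X` and `g : !B ⟶ X`
there is a co-Kleisli morphism `h : !(!A ⨿ !B) ⟶ X` with `h ∘ ι₁ = f` and `h ∘ ι₂ = g`
in `C_!`, where co-Kleisli composition of `u : !Y ⟶ Z` and `v : !Z ⟶ W` is
`δ_Y ≫ !u ≫ v` (uniqueness of `h` is not required). -/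
theorem comonad_coKleisli_weak_coproduct
    {C : Type u} [Category.{v} C] [HasBinaryCoproducts C]
    (Q : Comonad C) (A B X : C) (f : Q.obj A ⟶ X) (g : Q.obj B ⟶ X) :
    ∃ h : Q.obj (Q.obj A ⨿ Q.obj B) ⟶ X,
      -- h ∘ ι₁ = f in the co-Kleisli category
      Q.δ.app A ≫ Q.map (coprod.inl : Q.obj A ⟶ Q.obj A ⨿ Q.obj B) ≫ h = f ∧
      -- h ∘ ι₂ = g in the co-Kleisli category
      Q.δ.app B ≫ Q.map (coprod.inr : Q.obj B ⟶ Q.obj A ⨿ Q.obj B) ≫ h = g := by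
  refine ⟨Q.ε.app (Q.obj A ⨿ Q.obj B) ≫ coprod.desc f g, ?_, ?_⟩ <;>
  · rw [← Category.assoc (Q.map _), Q.ε.naturality]
    simp
    exact colimit.ι_desc _ _
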